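/- Let b_i, b_j, b_m ∈ ∂O be such that b_i = x_ℓ b_m and b_j = x_k b_m (across-the-corner neighbors with x_k b_i = x_ℓ b_j). Then the entries of the vector A_k c_i − A_ℓ c_j lie in the ideal I(B_O) generated by the entries of the commutators of the generic multiplication matrices, where c_j = (c_{1j},…,c_{μj})^tr. Specifically, A_k c_i − A_ℓ c_j = A_k(c_i − A_ℓ c_m) + (A_k A_ℓ − A_ℓ A_k)c_m − A_ℓ(c_j − A_k c_m), and the entries of c_i − A_ℓ c_m and c_j − A_k c_m lie in I(B_O). -/

import Mathlib

open MvPolynomial Finsupp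

open scoped Classical

set_option synthInstance.maxHeartbeats 1000000
set_option maxHeartbeats 1000000

/-- The border of a finite set of monomials (represented as exponent vectors). -/
noncomputable def borderSet (n : ℕ) (O : Finset (Fin n →₀ ℕ)) : Finset (Fin n →₀ ℕ) :=
  (O.biUnion (fun t => Finset.image (fun k => t + Finsupp.single k 1) Finset.univ)) \ O

/-- The polynomial ring `K[c_{ij}]` in the generic coefficients, indexed by pairs `(t, b)` of an
order ideal term `t` and a border term `b`. -/
abbrev CoeffRing (K : Type*) [Field K] (n : ℕ) : Type _ :=
  MvPolynomial ((Fin n →₀ ℕ) × (Fin n →₀ ℕ)) K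

/-- The `k`-th generic multiplication matrix of the generic `O`-border prebasis
`g_b = b - Σ_{t ∈ O} c_{t,b} t`. -/
noncomputable def Agen (K : Type*) [Field K] (n : ℕ) (O : Finset (Fin n →₀ ℕ)) (k : Fin n) :
    Matrix ↥O ↥O (CoeffRing K n) :=
  Matrix.of fun r i =>
    if ((i : Fin n →₀ ℕ) + Finsupp.single k 1) ∈ O then
      (if (r : Fin n →₀ ℕ) = (i : Fin n →₀ ℕ) + Finsupp.single k 1 then 1 else 0)
    else if ((i : Fin n →₀ ℕ) + Finsupp.single k 1) ∈ borderSet n O then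
      X ((r : Fin n →₀ ℕ), (i : Fin n →₀ ℕ) + Finsupp.single k 1)
    else 0

/-- The vanishing ideal `I(𝔹_O)` of the `O`-border basis scheme: the ideal generated by the
entries of the commutators of the generic multiplication matrices. -/
noncomputable def bbsIdeal (K : Type*) [Field K] (n : ℕ) (O : Finset (Fin n →₀ ℕ)) :
    Ideal (CoeffRing K n) :=
  Ideal.span {x | ∃ (k l : Fin n) (r i : ↥O),
    x = (Agen K n O k * Agen K n O l - Agen K n O l * Agen K n O k) r i}


/-- The column vector `c_j = (c_{1j},…,c_{μj})` of generic coefficients of a border term. -/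
noncomputable def cvec (K : Type*) [Field K] (n : ℕ) (O : Finset (Fin n →₀ ℕ))
    (b : Fin n →₀ ℕ) : ↥O → CoeffRing K n :=
  fun t => X ((t : Fin n →₀ ℕ), b)

/-- standard basis vector -/
noncomputable def evec (K : Type*) [Field K] (n : ℕ) (O : Finset (Fin n →₀ ℕ))
    (t : Fin n →₀ ℕ) : ↥O → CoeffRing K n :=
  fun r => if (r : Fin n →₀ ℕ) = t then 1 else 0

lemma mulVec_evec {K : Type*} [Field K] {n : ℕ} {O : Finset (Fin n →₀ ℕ)}
    (M : Matrix ↥O ↥O (CoeffRing K n)) (t : ↥O) :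
    M.mulVec (evec K n O (t : Fin n →₀ ℕ)) = fun r => M r t := by
  funext r
  simp only [Matrix.mulVec, dotProduct, evec]
  rw [Finset.sum_congr rfl (fun i _ => ?_), Finset.sum_ite_eq' Finset.univ t (fun i => M r i)]
  · simp
  · congr 1
    simp only [← Subtype.ext_iff]
    split_ifs <;> simp

lemma border_mem_iff {n : ℕ} {O : Finset (Fin n →₀ ℕ)} {b : Fin n →₀ ℕ} :
    b ∈ borderSet n O ↔ (∃ t ∈ O, ∃ k : Fin n, b = t + Finsupp.single k 1) ∧ b ∉ O := by
  simp only [borderSet, Finset.mem_sdiff, Finset.mem_biUnion, Finset.mem_image,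
    Finset.mem_univ, true_and]
  constructor
  · rintro ⟨⟨t, ht, k, hk⟩, hb⟩; exact ⟨⟨t, ht, k, hk.symm⟩, hb⟩
  · rintro ⟨⟨t, ht, k, hk⟩, hb⟩; exact ⟨⟨t, ht, k, hk.symm⟩, hb⟩

/-- If `t0 ∈ O` and `t0 + x_s ∉ O`, then `A_s e_{t0} = c_{t0+x_s}`. -/
lemma Agen_mulVec_evec_border {K : Type*} [Field K] {n : ℕ} {O : Finset (Fin n →₀ ℕ)}
    {t0 : Fin n →₀ ℕ} (ht0 : t0 ∈ O) {s : Fin n}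
    (h : t0 + Finsupp.single s 1 ∉ O) :
    (Agen K n O s).mulVec (evec K n O t0) = cvec K n O (t0 + Finsupp.single s 1) := by
  have hb : t0 + Finsupp.single s 1 ∈ borderSet n O :=
    border_mem_iff.2 ⟨⟨t0, ht0, s, rfl⟩, h⟩
  rw [show t0 = ((⟨t0, ht0⟩ : ↥O) : Fin n →₀ ℕ) from rfl, mulVec_evec]
  funext r
  simp [Agen, cvec, h, hb]

/-- If `t0 ∈ O` and `t0 + x_s ∈ O`, then `A_s e_{t0} = e_{t0+x_s}`. -/
lemma Agen_mulVec_evec_mem {K : Type*} [Field K] {n : ℕ} {O : Finset (Fin n →₀ ℕ)}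
    {t0 : Fin n →₀ ℕ} (ht0 : t0 ∈ O) {s : Fin n}
    (h : t0 + Finsupp.single s 1 ∈ O) :
    (Agen K n O s).mulVec (evec K n O t0) = evec K n O (t0 + Finsupp.single s 1) := by
  rw [show t0 = ((⟨t0, ht0⟩ : ↥O) : Fin n →₀ ℕ) from rfl, mulVec_evec]
  funext r
  simp [Agen, evec, h]

/-- Key lemma: if `b, bm` are border terms with `b = x_l · bm` then the entries of
`c_b − A_l c_{bm}` are in the ideal. -/
lemma key {K : Type*} [Field K] {n : ℕ} {O : Finset (Fin n →₀ ℕ)}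
    (hO : ∀ t ∈ O, ∀ s : Fin n →₀ ℕ, s ≤ t → s ∈ O)
    {b bm : Fin n →₀ ℕ} (hb : b ∈ borderSet n O) (hbm : bm ∈ borderSet n O)
    {l : Fin n} (hbl : b = bm + Finsupp.single l 1) :
    ∀ t : ↥O, cvec K n O b t - (Agen K n O l).mulVec (cvec K n O bm) t ∈ bbsIdeal K n O := by
  obtain ⟨⟨t', ht', k', hk'⟩, hbO⟩ := border_mem_iff.1 hb
  have hbmO : bm ∉ O := (border_mem_iff.1 hbm).2
  -- k' ≠ l
  have hkl : k' ≠ l := by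
    rintro rfl
    apply hbmO
    have : bm = t' := by
      have := hbl.symm.trans hk'
      exact add_right_cancel this
    exact this ▸ ht'
  -- t' has positive l-component
  have hle : Finsupp.single l 1 ≤ t' := by
    rw [Finsupp.single_le_iff]
    have : b l = t' l + (Finsupp.single k' (1:ℕ)) l := by rw [hk']; simp
    have h2 : b l = bm l + 1 := by rw [hbl]; simp
    rw [Finsupp.single_apply, if_neg hkl] at this
    omega
  set t0 : Fin n →₀ ℕ := t' - Finsupp.single l 1 with ht0def
  have ht0l : t0 + Finsupp.single l 1 = t' := tsub_add_cancel_of_le hle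
  have ht0 : t0 ∈ O := hO t' ht' t0 tsub_le_self
  have ht0k : t0 + Finsupp.single k' 1 = bm := by
    have h1 : t0 + Finsupp.single l 1 + Finsupp.single k' 1 = bm + Finsupp.single l 1 := by
      rw [ht0l, ← hk', hbl]
    have h2 : t0 + Finsupp.single k' 1 + Finsupp.single l 1 = bm + Finsupp.single l 1 := by
      rw [← h1, add_right_comm]
    exact add_right_cancel h2
  -- c_b = A_{k'} A_l e_{t0},  A_l c_bm = A_l A_{k'} e_{t0}
  have hcb : cvec K n O b = (Agen K n O k').mulVec ((Agen K n O l).mulVec (evec K n O t0)) := by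
    rw [Agen_mulVec_evec_mem ht0 (ht0l ▸ ht'), ht0l,
      Agen_mulVec_evec_border ht' (hk' ▸ hbO), ← hk']
  have hcbm : (Agen K n O l).mulVec (cvec K n O bm) =
      (Agen K n O l).mulVec ((Agen K n O k').mulVec (evec K n O t0)) := by
    rw [Agen_mulVec_evec_border ht0 (ht0k ▸ hbmO), ht0k]
  intro t
  rw [hcb, hcbm, Matrix.mulVec_mulVec, Matrix.mulVec_mulVec, ← Pi.sub_apply,
    ← Matrix.sub_mulVec, show t0 = ((⟨t0, ht0⟩ : ↥O) : Fin n →₀ ℕ) from rfl, mulVec_evec]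
  exact Ideal.subset_span ⟨k', l, t, ⟨t0, ht0⟩, rfl⟩

example : True := trivial

lemma mulVec_mem_ideal {K : Type*} [Field K] {n : ℕ} {O : Finset (Fin n →₀ ℕ)}
    (M : Matrix ↥O ↥O (CoeffRing K n)) {v : ↥O → CoeffRing K n} {I : Ideal (CoeffRing K n)}
    (hv : ∀ r, v r ∈ I) (t : ↥O) : M.mulVec v t ∈ I := by
  simp only [Matrix.mulVec, dotProduct]
  exact Ideal.sum_mem I fun i _ => Ideal.mul_mem_left I _ (hv i)

/-- For across-the-corner neighbors `b_i = x_ℓ b_m`, `b_j = x_k b_m`, the entries of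
`A_k c_i − A_ℓ c_j` lie in `I(𝔹_O)`; indeed the entries of `c_i − A_ℓ c_m` and of
`c_j − A_k c_m` lie in `I(𝔹_O)` and
`A_k c_i − A_ℓ c_j = A_k(c_i − A_ℓ c_m) + (A_k A_ℓ − A_ℓ A_k)c_m − A_ℓ(c_j − A_k c_m)`. -/
theorem acrossTheCorner_entries_mem (K : Type*) [Field K] (n : ℕ)
    (O : Finset (Fin n →₀ ℕ)) (h0 : (0 : Fin n →₀ ℕ) ∈ O)
    (hO : ∀ t ∈ O, ∀ s : Fin n →₀ ℕ, s ≤ t → s ∈ O)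
    (bi bj bm : Fin n →₀ ℕ) (hbi : bi ∈ borderSet n O) (hbj : bj ∈ borderSet n O)
    (hbm : bm ∈ borderSet n O) (k l : Fin n)
    (hil : bi = bm + Finsupp.single l 1) (hjk : bj = bm + Finsupp.single k 1) :
    (∀ t : ↥O,
      cvec K n O bi t - (Agen K n O l).mulVec (cvec K n O bm) t ∈ bbsIdeal K n O) ∧
    (∀ t : ↥O,
      cvec K n O bj t - (Agen K n O k).mulVec (cvec K n O bm) t ∈ bbsIdeal K n O) ∧
    ((Agen K n O k).mulVec (cvec K n O bi) - (Agen K n O l).mulVec (cvec K n O bj) =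
      (Agen K n O k).mulVec (cvec K n O bi - (Agen K n O l).mulVec (cvec K n O bm)) +
        (Agen K n O k * Agen K n O l - Agen K n O l * Agen K n O k).mulVec (cvec K n O bm) -
        (Agen K n O l).mulVec (cvec K n O bj - (Agen K n O k).mulVec (cvec K n O bm))) ∧
    (∀ t : ↥O,
      (Agen K n O k).mulVec (cvec K n O bi) t - (Agen K n O l).mulVec (cvec K n O bj) t ∈
        bbsIdeal K n O) := by
  have h1 := key (K := K) hO hbi hbm hil
  have h2 := key (K := K) hO hbj hbm hjk
  have h3 : (Agen K n O k).mulVec (cvec K n O bi) - (Agen K n O l).mulVec (cvec K n O bj) =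
      (Agen K n O k).mulVec (cvec K n O bi - (Agen K n O l).mulVec (cvec K n O bm)) +
        (Agen K n O k * Agen K n O l - Agen K n O l * Agen K n O k).mulVec (cvec K n O bm) -
        (Agen K n O l).mulVec (cvec K n O bj - (Agen K n O k).mulVec (cvec K n O bm)) := by
    rw [Matrix.mulVec_sub, Matrix.mulVec_sub, Matrix.sub_mulVec, ← Matrix.mulVec_mulVec,
      ← Matrix.mulVec_mulVec]
    abel
  refine ⟨h1, h2, h3, fun t => ?_⟩
  rw [← Pi.sub_apply, h3]
  simp only [Pi.add_apply, Pi.sub_apply]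
  refine sub_mem (add_mem ?_ ?_) ?_
  · exact mulVec_mem_ideal _ (fun r => by simpa using h1 r) t
  · simp only [Matrix.mulVec, dotProduct]
    exact Ideal.sum_mem _ fun i _ =>
      Ideal.mul_mem_right _ _ (Ideal.subset_span ⟨k, l, t, i, rfl⟩)
  · exact mulVec_mem_ideal _ (fun r => by simpa using h2 r) t
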